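/- For every integer t ≥ 2, there exists a tournament on a vertex set of 125 · 7^{t−2} elements together with a t-coloring of its edges such that no four vertices carry a monochromatic transitive subtournament of order 4; that is, there exist no distinct vertices a_1, a_2, a_3, a_4 and no color i such that a_r → a_s is an edge of color i for all 1 ≤ r < s ≤ 4. (Consequently 125 · 7^{t−2} + 1 ≤ R_t(4) for all t ≥ 2.) -/

import Mathlib

set_option maxRecDepth 100000
set_option maxHeartbeats 10000000

abbrev F : Type := Fin 5 × Fin 5 × Fin 5

def H0 : List F := [(0,0,1), (0,2,1), (0,2,3), (0,3,1), (0,4,0), (0,4,4), (1,0,0), (1,0,1), (1,0,3), (1,1,0), (1,1,2), (1,1,3), (1,2,1), (1,2,4), (1,4,1), (2,1,4), (2,4,0), (2,4,1), (3,0,2), (3,2,0), (3,2,4), (3,3,3), (3,4,0), (3,4,2), (3,4,4), (4,0,3), (4,1,1), (4,1,3), (4,2,4), (4,3,3), (4,4,1)]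
def H1 : List F := [(0,0,2), (0,1,2), (0,3,0), (0,3,3), (0,4,1), (0,4,2), (1,0,4), (1,1,1), (1,3,0), (1,3,3), (1,3,4), (1,4,0), (1,4,3), (2,0,0), (2,0,1), (2,0,2), (2,2,0), (2,2,1), (2,2,4), (2,3,2), (2,4,2), (2,4,3), (3,0,1), (3,1,1), (3,2,1), (3,2,2), (3,3,2), (3,4,3), (4,2,3), (4,3,0), (4,3,2)]

def AL : List F := H0 ++ H1

lemma hxor : ∀ d : F, d ≠ 0 → ((d ∈ AL) ↔ ¬ ((-d) ∈ AL)) := by decide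

lemma noTT0 : ∀ b ∈ H0, ∀ c ∈ H0, ∀ d ∈ H0,
    c - b ∈ H0 → d - b ∈ H0 → d - c ∈ H0 → False := by decide

lemma noTT1 : ∀ b ∈ H1, ∀ c ∈ H1, ∀ d ∈ H1,
    c - b ∈ H1 → d - b ∈ H1 → d - c ∈ H1 → False := by decide

def GoodT (α : Type) (t : ℕ) : Prop :=
  ∃ (edge : α → α → Prop) (color : α → α → Fin t),
    (∀ a, ¬ edge a a) ∧
    (∀ a b, a ≠ b → (edge a b ↔ ¬ edge b a)) ∧
    ¬ ∃ (f : Fin 4 → α) (i : Fin t), Function.Injective f ∧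
        ∀ r s : Fin 4, r < s → edge (f r) (f s) ∧ color (f r) (f s) = i

lemma goodT_equiv {α β : Type} {t : ℕ} (e : α ≃ β) (h : GoodT α t) : GoodT β t := by
  obtain ⟨edge, color, h1, h2, h3⟩ := h
  refine ⟨fun x y => edge (e.symm x) (e.symm y), fun x y => color (e.symm x) (e.symm y),
    fun a => h1 _, fun a b hab => h2 _ _ (fun hc => hab (e.symm.injective hc)), ?_⟩
  rintro ⟨f, i, hf, hm⟩
  exact h3 ⟨fun r => e.symm (f r), i, fun r s hrs => hf (e.symm.injective hrs), hm⟩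

lemma base125 : GoodT F 2 := by
  refine ⟨fun x y => (y - x) ∈ AL,
    fun x y => if (y - x) ∈ H0 then 0 else 1, ?_, ?_, ?_⟩
  · intro a h
    simp only [sub_self] at h
    exact absurd h (by decide)
  · intro a b hab
    have hd : b - a ≠ 0 := sub_ne_zero.mpr (Ne.symm hab)
    have := hxor (b - a) hd
    rwa [neg_sub] at this
  · rintro ⟨f, i, hf, hm⟩
    have key0 : ∀ r s : Fin 4, r < s → i = 0 → (f s - f r) ∈ H0 := by
      intro r s hrs hi
      obtain ⟨he, hc⟩ := hm r s hrs
      dsimp only at hc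
      rw [hi] at hc
      by_contra h
      rw [if_neg h] at hc
      exact absurd hc (by decide)
    have key1 : ∀ r s : Fin 4, r < s → i = 1 → (f s - f r) ∈ H1 := by
      intro r s hrs hi
      obtain ⟨he, hc⟩ := hm r s hrs
      dsimp only at he hc
      rw [hi] at hc
      by_cases h : (f s - f r) ∈ H0
      · rw [if_pos h] at hc; exact absurd hc (by decide)
      · rcases List.mem_append.mp he with h' | h'
        · exact absurd h' h
        · exact h'
    have e01 : (0:Fin 4) < 1 := by decide
    have e02 : (0:Fin 4) < 2 := by decide
    have e03 : (0:Fin 4) < 3 := by decide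
    have e12 : (1:Fin 4) < 2 := by decide
    have e13 : (1:Fin 4) < 3 := by decide
    have e23 : (2:Fin 4) < 3 := by decide
    have hsub : ∀ x y : F, (y - f 0) - (x - f 0) = y - x := by
      intro x y; abel
    fin_cases i
    · exact noTT0 _ (key0 0 1 e01 rfl) _ (key0 0 2 e02 rfl) _ (key0 0 3 e03 rfl)
        (by rw [hsub]; exact key0 1 2 e12 rfl)
        (by rw [hsub]; exact key0 1 3 e13 rfl)
        (by rw [hsub]; exact key0 2 3 e23 rfl)
    · exact noTT1 _ (key1 0 1 e01 rfl) _ (key1 0 2 e02 rfl) _ (key1 0 3 e03 rfl)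
        (by rw [hsub]; exact key1 1 2 e12 rfl)
        (by rw [hsub]; exact key1 1 3 e13 rfl)
        (by rw [hsub]; exact key1 2 3 e23 rfl)

def padj (u v : Fin 7) : Prop := v - u = 1 ∨ v - u = 2 ∨ v - u = 4

instance : DecidablePred fun p : Fin 7 × Fin 7 => padj p.1 p.2 := by
  intro p; unfold padj; infer_instance

instance (u v : Fin 7) : Decidable (padj u v) := by unfold padj; infer_instance

lemma p1 : ∀ u : Fin 7, ¬ padj u u := by decide

lemma p2 : ∀ u v : Fin 7, u ≠ v → (padj u v ↔ ¬ padj v u) := by decide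

lemma p3 : ∀ a b c d : Fin 7, padj a b → padj a c → padj a d →
    padj b c → padj b d → padj c d → False := by decide

lemma step {α : Type} {t : ℕ} (h : GoodT α t) : GoodT (Fin 7 × α) (t + 1) := by
  obtain ⟨edge, color, h1, h2, h3⟩ := h
  refine ⟨fun p q => (p.1 = q.1 ∧ edge p.2 q.2) ∨ (p.1 ≠ q.1 ∧ padj p.1 q.1),
    fun p q => if p.1 = q.1 then (color p.2 q.2).castSucc else Fin.last t, ?_, ?_, ?_⟩
  · rintro a (⟨-, h⟩ | ⟨h, -⟩)
    · exact h1 _ h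
    · exact h rfl
  · rintro ⟨u, x⟩ ⟨v, y⟩ hab
    by_cases huv : u = v
    · subst huv
      have hxy : x ≠ y := fun h => hab (by rw [h])
      constructor
      · rintro (⟨-, he⟩ | ⟨hne, -⟩)
        · rintro (⟨-, he'⟩ | ⟨hne, -⟩)
          · exact ((h2 x y hxy).mp he) he'
          · exact hne rfl
        · exact absurd rfl hne
      · intro hn
        left
        refine ⟨rfl, (h2 x y hxy).mpr fun he => hn (Or.inl ⟨rfl, he⟩)⟩
    · constructor
      · rintro (⟨he, -⟩ | ⟨-, hp⟩)
        · exact absurd he huv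
        · rintro (⟨he', -⟩ | ⟨-, hp'⟩)
          · exact huv he'.symm
          · exact ((p2 u v huv).mp hp) hp'
      · intro hn
        right
        refine ⟨huv, (p2 u v huv).mpr fun hp => hn (Or.inr ⟨Ne.symm huv, hp⟩)⟩
  · rintro ⟨f, i, hf, hm⟩
    by_cases hi : i = Fin.last t
    · -- all first components distinct, get TT4 in Paley
      have hu : ∀ r s : Fin 4, r < s → (f r).1 ≠ (f s).1 := by
        intro r s hrs he
        obtain ⟨-, hc⟩ := hm r s hrs
        dsimp only at hc
        rw [if_pos he, hi] at hc
        exact absurd hc (Fin.castSucc_lt_last _).ne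
      have hp : ∀ r s : Fin 4, r < s → padj (f r).1 (f s).1 := by
        intro r s hrs
        obtain ⟨he, -⟩ := hm r s hrs
        rcases he with ⟨he, -⟩ | ⟨-, hp⟩
        · exact absurd he (hu r s hrs)
        · exact hp
      exact p3 _ _ _ _ (hp 0 1 (by decide)) (hp 0 2 (by decide)) (hp 0 3 (by decide))
        (hp 1 2 (by decide)) (hp 1 3 (by decide)) (hp 2 3 (by decide))
    · obtain ⟨j, rfl⟩ := Fin.exists_castSucc_eq.mpr hi
      have hu : ∀ r s : Fin 4, r < s → (f r).1 = (f s).1 := by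
        intro r s hrs
        by_contra he
        obtain ⟨-, hc⟩ := hm r s hrs
        dsimp only at hc
        rw [if_neg he] at hc
        exact (Fin.castSucc_lt_last j).ne' hc
      have hueq : ∀ r s : Fin 4, (f r).1 = (f s).1 := by
        intro r s
        rcases lt_trichotomy r s with h | h | h
        · exact hu r s h
        · rw [h]
        · exact (hu s r h).symm
      refine h3 ⟨fun r => (f r).2, j, ?_, ?_⟩
      · intro r s hrs
        apply hf
        exact Prod.ext (hueq r s) hrs
      · intro r s hrs
        obtain ⟨he, hc⟩ := hm r s hrs
        dsimp only at he hc
        have h1' := hueq r s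
        rw [if_pos h1'] at hc
        refine ⟨?_, Fin.castSucc_injective _ hc⟩
        rcases he with ⟨-, he⟩ | ⟨hne, -⟩
        · exact he
        · exact absurd h1' hne

lemma good_cast {n m t : ℕ} (h : n = m) (hg : GoodT (Fin n) t) : GoodT (Fin m) t := by
  subst h; exact hg

lemma main (k : ℕ) : GoodT (Fin (125 * 7 ^ k)) (2 + k) := by
  induction k with
  | zero =>
    refine good_cast (by norm_num)
      (goodT_equiv (((Equiv.refl (Fin 5)).prodCongr finProdFinEquiv).trans finProdFinEquiv) base125)
  | succ k ih =>
    have h7 : GoodT (Fin (7 * (125 * 7 ^ k))) (2 + k + 1) :=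
      goodT_equiv finProdFinEquiv (step ih)
    exact good_cast (by ring) h7

theorem stmt_9 (t : ℕ) (ht : 2 ≤ t) :
    ∃ (edge : Fin (125 * 7 ^ (t - 2)) → Fin (125 * 7 ^ (t - 2)) → Prop)
      (color : Fin (125 * 7 ^ (t - 2)) → Fin (125 * 7 ^ (t - 2)) → Fin t),
      (∀ a, ¬ edge a a) ∧
      (∀ a b, a ≠ b → (edge a b ↔ ¬ edge b a)) ∧
      ¬ ∃ (f : Fin 4 → Fin (125 * 7 ^ (t - 2))) (i : Fin t), Function.Injective f ∧
          ∀ r s : Fin 4, r < s → edge (f r) (f s) ∧ color (f r) (f s) = i := by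
  obtain ⟨k, rfl⟩ := Nat.exists_eq_add_of_le ht
  have h : 2 + k - 2 = k := by omega
  rw [h]
  exact main k
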